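/- For each fixed d ≥ 1 and N ≥ 2, the generating function of Euclidean billiard partitions with exactly d parts and largest part ≥ N arising from a fixed irreducible partition equals s(d,N)/(q²;q²)_d; i.e., the map (π₁, π₂) ↦ π₁ + π₂ from pairs (irreducible partition with d parts, weakly decreasing sequence of d nonnegative even integers) to Euclidean billiard partitions with d parts is a sum-preserving bijection, hence the generating function of all Euclidean billiard partitions with d parts is (Σ_N s(d,N))/(q²;q²)_d. -/

import Mathlib

/-- A Euclidean billiard partition: a strictly decreasing list of positive
integers, whose smallest (last) part is even, and in which no two adjacent
parts are both odd. -/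
def EBP (L : List ℕ) : Prop :=
  L ≠ [] ∧ (∀ m ∈ L, 0 < m) ∧ L.Chain' (· > ·) ∧
    Even (L.getLastD 1) ∧ L.Chain' fun a b => ¬(Odd a ∧ Odd b)


/-- An irreducible Euclidean billiard partition: additionally the smallest
part equals 2 and adjacent parts differ by at most 2. -/
def IrrEBP (L : List ℕ) : Prop :=
  EBP L ∧ L.getLastD 1 = 2 ∧ L.Chain' fun a b => a ≤ b + 2

/-- The `x = 1` generating function `s(d, N)` of irreducible Euclidean
billiard partitions with `d` parts and largest part `N`, as a power series
in `q` over `ℤ`. -/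
noncomputable def sPSd (d N : ℕ) : PowerSeries ℤ :=
  ∑ᶠ L ∈ {L : List ℕ | IrrEBP L ∧ L.length = d ∧ L.headD 0 = N},
    PowerSeries.monomial L.sum (1 : ℤ)

/-- `(q²; q²)_d = ∏_{j=1}^{d} (1 - q^{2j})`. -/
noncomputable def poch (d : ℕ) : PowerSeries ℤ :=
  ∏ j ∈ Finset.range d, (1 - PowerSeries.X ^ (2 * (j + 1)))


open List

section ChainCompat
set_option linter.deprecated false

@[simp] theorem chain'_nil {α : Type*} {R : α → α → Prop} : Chain' R [] := List.IsChain.nil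

@[simp] theorem chain'_singleton {α : Type*} {R : α → α → Prop} (a : α) : Chain' R [a] :=
  List.IsChain.singleton a

@[simp] theorem chain'_cons {α : Type*} {R : α → α → Prop} {a b : α} {l : List α} :
    Chain' R (a :: b :: l) ↔ R a b ∧ Chain' R (b :: l) := isChain_cons_cons

theorem chain'_reverse {α : Type*} {R : α → α → Prop} {l : List α} :
    Chain' R (reverse l) ↔ Chain' (flip R) l := isChain_reverse

theorem chain'_map {α β : Type*} {R : α → α → Prop} (f : β → α) {l : List β} :
    Chain' R (map f l) ↔ Chain' (fun a b : β => R (f a) (f b)) l := isChain_map f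

theorem chain'_append {α : Type*} {R : α → α → Prop} {l₁ l₂ : List α} :
    Chain' R (l₁ ++ l₂) ↔ Chain' R l₁ ∧ Chain' R l₂ ∧ ∀ x ∈ l₁.getLast?, ∀ y ∈ l₂.head?, R x y :=
  isChain_append

theorem chain'_iff_pairwise {α : Type*} {R : α → α → Prop} [IsTrans α R] {l : List α} :
    Chain' R l ↔ Pairwise R l :=
  @isChain_iff_pairwise _ R _ ⟨fun h1 h2 => IsTrans.trans _ _ _ h1 h2⟩

theorem List.Chain'.imp {α : Type*} {R S : α → α → Prop} (H : ∀ a b, R a b → S a b)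
    {l : List α} (p : Chain' R l) : Chain' S l := List.IsChain.imp (fun a b h => H a b h) p

theorem List.Chain'.prefix {α : Type*} {R : α → α → Prop} {l l₁ : List α}
    (h : Chain' R l) (h' : l₁ <+: l) : Chain' R l₁ := List.IsChain.prefix h h'

end ChainCompat

/-- no two odd. -/
def NTO (a b : ℕ) : Prop := ¬(Odd a ∧ Odd b)

def buildAux : ℕ → ℕ → List ℕ → List ℕ
  | b, _, [] => [b]
  | b, a, c :: l => b :: buildAux (if a % 2 = c % 2 then b + 2 else b + 1) c l

def build : List ℕ → List ℕ
  | [] => []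
  | a :: l => buildAux 2 a l

@[simp] lemma buildAux_nil (b a : ℕ) : buildAux b a [] = [b] := rfl
@[simp] lemma buildAux_cons (b a c : ℕ) (l : List ℕ) :
    buildAux b a (c :: l) = b :: buildAux (if a % 2 = c % 2 then b + 2 else b + 1) c l := rfl
@[simp] lemma build_nil : build [] = [] := rfl
@[simp] lemma build_cons (a : ℕ) (l : List ℕ) : build (a :: l) = buildAux 2 a l := rfl

lemma buildAux_head (b a : ℕ) (l : List ℕ) : ∃ t, buildAux b a l = b :: t := by
  cases l <;> exact ⟨_, rfl⟩

lemma NTO_iff {a b : ℕ} : NTO a b ↔ ¬(a % 2 = 1 ∧ b % 2 = 1) := by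
  unfold NTO; rw [Nat.odd_iff, Nat.odd_iff]

lemma buildAux_spec (l : List ℕ) : ∀ a b : ℕ, Chain' (· < ·) (a :: l) → Chain' NTO (a :: l) →
    b % 2 = a % 2 → 2 ≤ b → b ≤ a →
    (buildAux b a l).length = l.length + 1 ∧
    Chain' (· < ·) (buildAux b a l) ∧
    Chain' (fun x y => y ≤ x + 2) (buildAux b a l) ∧
    Chain' NTO (buildAux b a l) ∧
    (∀ x ∈ buildAux b a l, b ≤ x) ∧
    Forall₂ (fun x y => y ≤ x ∧ y % 2 = x % 2) (a :: l) (buildAux b a l) ∧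
    Chain' (· ≤ ·) (zipWith (· - ·) (a :: l) (buildAux b a l)) := by
  induction l with
  | nil =>
    intro a b _ _ hpar h2 hba
    refine ⟨rfl, chain'_singleton _, chain'_singleton _, chain'_singleton _, by simp, ?_, by simp⟩
    exact Forall₂.cons ⟨hba, hpar⟩ Forall₂.nil
  | cons c l ih =>
    intro a b hlt hnto hpar h2 hba
    have hac : a < c := (chain'_cons.1 hlt).1
    have hltc : Chain' (· < ·) (c :: l) := (chain'_cons.1 hlt).2
    have hntoc : Chain' NTO (c :: l) := (chain'_cons.1 hnto).2
    have hnac : ¬(a % 2 = 1 ∧ c % 2 = 1) := NTO_iff.1 (chain'_cons.1 hnto).1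
    by_cases hpc : a % 2 = c % 2
    case pos =>
      have key := ih c (b + 2) hltc hntoc (by omega) (by omega) (by omega)
      obtain ⟨H1, H2, H3, H4, H5, H6, H7⟩ := key
      obtain ⟨t, ht⟩ := buildAux_head (b + 2) c l
      simp only [buildAux_cons, if_pos hpc]
      refine ⟨by simp [H1], ?_, ?_, ?_, ?_, ?_, ?_⟩
      · rw [ht, chain'_cons, ← ht]; exact ⟨by omega, H2⟩
      · rw [ht, chain'_cons, ← ht]; exact ⟨by omega, H3⟩
      · rw [ht, chain'_cons, ← ht]
        exact ⟨NTO_iff.2 (by omega), H4⟩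
      · intro x hx
        rw [mem_cons] at hx
        rcases hx with rfl | hx
        · exact le_rfl
        · exact le_trans (by omega) (H5 x hx)
      · exact Forall₂.cons ⟨hba, hpar⟩ H6
      · rw [ht]
        show Chain' (· ≤ ·) ((a - b) :: zipWith (· - ·) (c :: l) ((b+2) :: t))
        rw [zipWith_cons_cons, chain'_cons]
        rw [ht, zipWith_cons_cons] at H7
        exact ⟨by omega, H7⟩
    case neg =>
      have key := ih c (b + 1) hltc hntoc (by omega) (by omega) (by omega)
      obtain ⟨H1, H2, H3, H4, H5, H6, H7⟩ := key
      obtain ⟨t, ht⟩ := buildAux_head (b + 1) c l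
      simp only [buildAux_cons, if_neg hpc]
      refine ⟨by simp [H1], ?_, ?_, ?_, ?_, ?_, ?_⟩
      · rw [ht, chain'_cons, ← ht]; exact ⟨by omega, H2⟩
      · rw [ht, chain'_cons, ← ht]; exact ⟨by omega, H3⟩
      · rw [ht, chain'_cons, ← ht]
        exact ⟨NTO_iff.2 (by omega), H4⟩
      · intro x hx
        rw [mem_cons] at hx
        rcases hx with rfl | hx
        · exact le_rfl
        · exact le_trans (by omega) (H5 x hx)
      · exact Forall₂.cons ⟨hba, hpar⟩ H6
      · rw [ht]
        show Chain' (· ≤ ·) ((a - b) :: zipWith (· - ·) (c :: l) ((b+1) :: t))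
        rw [zipWith_cons_cons, chain'_cons]
        rw [ht, zipWith_cons_cons] at H7
        exact ⟨by omega, H7⟩

lemma build_spec {r : List ℕ} (hne : r ≠ []) (hpos : ∀ x ∈ r, 0 < x)
    (hc : Chain' (· < ·) r) (hhead : Even (r.headD 1)) (hodd : Chain' NTO r) :
    (build r).length = r.length ∧
    (build r).head? = some 2 ∧
    Chain' (· < ·) (build r) ∧
    Chain' (fun x y => y ≤ x + 2) (build r) ∧
    Chain' NTO (build r) ∧
    (∀ x ∈ build r, 2 ≤ x) ∧
    Forall₂ (fun x y => y ≤ x ∧ y % 2 = x % 2) r (build r) ∧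
    Chain' (· ≤ ·) (zipWith (· - ·) r (build r)) := by
  obtain ⟨a, l, rfl⟩ := List.exists_cons_of_ne_nil hne
  have ha : Even a := by simpa using hhead
  have ha2 : 2 ≤ a := by
    have := hpos a (mem_cons_self)
    rcases ha with ⟨k, rfl⟩; omega
  have hpar : (2 : ℕ) % 2 = a % 2 := by
    rw [Nat.even_iff] at ha; omega
  obtain ⟨H1, H2, H3, H4, H5, H6, H7⟩ := buildAux_spec l a 2 hc hodd hpar le_rfl ha2
  obtain ⟨t, ht⟩ := buildAux_head 2 a l
  exact ⟨by simpa using H1, by rw [build_cons, ht]; rfl, H2, H3, H4, H5, H6, H7⟩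

lemma forall₂_zip_add {r B : List ℕ} (h : Forall₂ (fun x y => y ≤ x ∧ y % 2 = x % 2) r B) :
    zipWith (· + ·) B (zipWith (· - ·) r B) = r ∧
    ∀ x ∈ zipWith (· - ·) r B, Even x := by
  induction h with
  | nil => simp
  | cons hab hrest ih =>
    obtain ⟨h1, h2⟩ := hab
    constructor
    · simp only [zipWith_cons_cons, ih.1]
      congr 1
      omega
    · intro x hx
      simp only [zipWith_cons_cons, mem_cons] at hx
      rcases hx with rfl | hx
      · rw [Nat.even_sub h1, Nat.even_iff, Nat.even_iff]; omega
      · exact ih.2 x hx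

lemma buildAux_add : ∀ (bs ms : List ℕ) (b m : ℕ), bs.length = ms.length →
    Chain' (· < ·) (b :: bs) → Chain' (fun x y => y ≤ x + 2) (b :: bs) →
    (∀ x ∈ m :: ms, x % 2 = 0) →
    buildAux b (b + m) (zipWith (· + ·) bs ms) = b :: bs := by
  intro bs
  induction bs with
  | nil =>
    intro ms b m hlen _ _ _
    obtain rfl : ms = [] := by simpa using (length_eq_zero_iff.1 hlen.symm)
    simp
  | cons b' bs ih =>
    intro ms b m hlen hlt hle hev
    obtain ⟨m', ms', rfl⟩ : ∃ m' ms', ms = m' :: ms' := by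
      cases ms with
      | nil => simp at hlen
      | cons x y => exact ⟨x, y, rfl⟩
    have hb' : b < b' := (chain'_cons.1 hlt).1
    have hb'2 : b' ≤ b + 2 := (chain'_cons.1 hle).1
    have hm : m % 2 = 0 := hev m (by simp)
    have hm' : m' % 2 = 0 := hev m' (by simp)
    rw [zipWith_cons_cons, buildAux_cons]
    have hcond : (if (b + m) % 2 = (b' + m') % 2 then b + 2 else b + 1) = b' := by
      by_cases h : (b + m) % 2 = (b' + m') % 2
      · rw [if_pos h]; omega
      · rw [if_neg h]; omega
    rw [hcond]
    congr 1
    exact ih ms' b' m' (by simpa using hlen) (chain'_cons.1 hlt).2 (chain'_cons.1 hle).2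
      (fun x hx => hev x (by simp at hx ⊢; tauto))

lemma build_add {bs ms : List ℕ} (hlen : bs.length = ms.length)
    (hc : Chain' (· < ·) bs) (hc2 : Chain' (fun x y => y ≤ x + 2) bs)
    (hhead : bs.head? = some 2) (hev : ∀ x ∈ ms, x % 2 = 0) :
    build (zipWith (· + ·) bs ms) = bs := by
  cases bs with
  | nil => simp at hhead
  | cons b bs' =>
    obtain rfl : (2:ℕ) = b := by simpa using hhead.symm
    cases ms with
    | nil => simp at hlen
    | cons m ms' =>
      rw [zipWith_cons_cons, build_cons]
      have : (2 : ℕ) + m = 2 + m := rfl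
      have := buildAux_add bs' ms' 2 m (by simpa using hlen) hc hc2 hev
      simpa [Nat.add_comm] using this

lemma chain'_zipWith_of {R S T : ℕ → ℕ → Prop}
    (H : ∀ a b x y, R a b → S x y → T (a + x) (b + y)) :
    ∀ (bs ms : List ℕ), Chain' R bs → Chain' S ms →
      Chain' T (zipWith (· + ·) bs ms) := by
  intro bs
  induction bs with
  | nil => intro ms _ _; simp
  | cons b bs ih =>
    intro ms hb hm
    cases ms with
    | nil => simp
    | cons m ms =>
      rw [zipWith_cons_cons]
      cases bs with
      | nil => simp
      | cons b' bs' =>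
        cases ms with
        | nil => simp
        | cons m' ms' =>
          rw [zipWith_cons_cons, chain'_cons]
          exact ⟨H b b' m m' (chain'_cons.1 hb).1 (chain'_cons.1 hm).1,
            by rw [← zipWith_cons_cons]; exact ih _ (chain'_cons.1 hb).2 (chain'_cons.1 hm).2⟩

lemma chain'_NTO_zipWith : ∀ (bs ms : List ℕ), Chain' NTO bs → (∀ x ∈ ms, x % 2 = 0) →
    Chain' NTO (zipWith (· + ·) bs ms) := by
  intro bs
  induction bs with
  | nil => intro ms _ _; simp
  | cons b bs ih =>
    intro ms hb hm
    cases ms with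
    | nil => simp
    | cons m ms =>
      rw [zipWith_cons_cons]
      cases bs with
      | nil => simp
      | cons b' bs' =>
        cases ms with
        | nil => simp
        | cons m' ms' =>
          rw [zipWith_cons_cons, chain'_cons]
          constructor
          · have h1 := NTO_iff.1 (chain'_cons.1 hb).1
            have h2 := hm m (by simp)
            have h3 := hm m' (by simp)
            rw [NTO_iff]
            omega
          · rw [← zipWith_cons_cons]
            exact ih _ (chain'_cons.1 hb).2 (fun x hx => hm x (by simp at hx ⊢; tauto))

lemma mem_zipWith_add : ∀ (bs ms : List ℕ) (x : ℕ), x ∈ zipWith (· + ·) bs ms →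
    ∃ y ∈ bs, ∃ z ∈ ms, x = y + z := by
  intro bs
  induction bs with
  | nil => simp
  | cons b bs ih =>
    intro ms x hx
    cases ms with
    | nil => simp at hx
    | cons m ms =>
      rw [zipWith_cons_cons, mem_cons] at hx
      rcases hx with rfl | hx
      · exact ⟨b, by simp, m, by simp, rfl⟩
      · obtain ⟨y, hy, z, hz, rfl⟩ := ih ms x hx
        exact ⟨y, by simp [hy], z, by simp [hz], rfl⟩

lemma sum_zipWith_add : ∀ (bs ms : List ℕ), bs.length = ms.length →
    (zipWith (· + ·) bs ms).sum = bs.sum + ms.sum := by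
  intro bs
  induction bs with
  | nil =>
    intro ms h
    obtain rfl : ms = [] := length_eq_zero_iff.1 (by simpa using h.symm)
    simp
  | cons b bs ih =>
    intro ms h
    cases ms with
    | nil => simp at h
    | cons m ms =>
      rw [zipWith_cons_cons, sum_cons, sum_cons, sum_cons, ih ms (by simpa using h)]
      ring

lemma zipWith_sub_add : ∀ (bs ms : List ℕ), bs.length = ms.length →
    zipWith (· - ·) (zipWith (· + ·) bs ms) bs = ms := by
  intro bs
  induction bs with
  | nil =>
    intro ms h
    obtain rfl : ms = [] := length_eq_zero_iff.1 (by simpa using h.symm)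
    simp
  | cons b bs ih =>
    intro ms h
    cases ms with
    | nil => simp at h
    | cons m ms =>
      rw [zipWith_cons_cons, zipWith_cons_cons, ih ms (by simpa using h)]
      congr 1
      omega

lemma getLast?_zipWith_add : ∀ (bs ms : List ℕ), bs.length = ms.length → bs ≠ [] →
    ∃ y z, bs.getLast? = some y ∧ ms.getLast? = some z ∧
      (zipWith (· + ·) bs ms).getLast? = some (y + z) := by
  intro bs
  induction bs using List.reverseRecOn with
  | nil => intro ms _ h; simp at h
  | append_singleton bs y _ =>
    intro ms hlen _
    induction ms using List.reverseRecOn with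
    | nil => simp at hlen
    | append_singleton ms z _ =>
      have hl : bs.length = ms.length := by
        simp only [length_append, length_cons] at hlen; omega
      refine ⟨y, z, by simp, by simp, ?_⟩
      rw [zipWith_append hl]
      simp


def ginv (L : List ℕ) : List ℕ × List ℕ :=
  ((build L.reverse).reverse, zipWith (· - ·) L (build L.reverse).reverse)

lemma headD_rev (l : List ℕ) (d : ℕ) : l.reverse.headD d = l.getLastD d := by
  rw [headD_eq_head?, head?_reverse, getLastD_eq_getLast?]

lemma getLastD_rev (l : List ℕ) (d : ℕ) : l.reverse.getLastD d = l.headD d := by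
  rw [getLastD_eq_getLast?, getLast?_reverse, headD_eq_head?]

lemma getLast?_of_ne_nil {l : List ℕ} (h : l ≠ []) : l.getLast? = some (l.getLastD 1) := by
  rw [getLast?_eq_getLast h, getLastD_eq_getLast?, getLast?_eq_getLast h]
  rfl

lemma mem_of_getLast?' {l : List ℕ} {a : ℕ} (h : l.getLast? = some a) : a ∈ l := by
  cases l with
  | nil => simp at h
  | cons x t =>
    rw [getLast?_eq_getLast (by simp)] at h
    obtain rfl := Option.some_inj.1 h.symm
    exact getLast_mem _

lemma ginv_spec {L : List ℕ} (hL : EBP L) :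
    IrrEBP (ginv L).1 ∧ (ginv L).1.length = L.length ∧ (ginv L).2.length = L.length ∧
    (ginv L).2.Chain' (· ≥ ·) ∧ (∀ m ∈ (ginv L).2, Even m) ∧
    zipWith (· + ·) (ginv L).1 (ginv L).2 = L := by
  obtain ⟨hne, hpos, hgt, hlast, hnto⟩ := hL
  set r := L.reverse with hr
  have hLr : L = r.reverse := (reverse_reverse L).symm
  have hne' : r ≠ [] := by simpa [hr] using hne
  have hpos' : ∀ x ∈ r, 0 < x := fun x hx => hpos x (by rwa [hr, mem_reverse] at hx)
  have hc : Chain' (· < ·) r := chain'_reverse.mpr hgt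
  have hhead : Even (r.headD 1) := by rwa [hr, headD_rev]
  have hnto' : Chain' NTO r := chain'_reverse.mpr (hnto.imp (fun a b h => by
    intro ⟨h1, h2⟩; exact h ⟨h2, h1⟩))
  obtain ⟨H1, H2, H3, H4, H5, H6, H7, H8⟩ := build_spec hne' hpos' hc hhead hnto'
  set B' := build r with hB'
  have hBne : B' ≠ [] := by
    intro h; rw [h] at H2; simp at H2
  have hlenB : B'.length = L.length := by rw [H1, hr, length_reverse]
  have hzlen : r.length = B'.length := H1.symm
  have hfst : (ginv L).1 = B'.reverse := rfl
  have hsnd : (ginv L).2 = (zipWith (· - ·) r B').reverse := by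
    show zipWith (· - ·) L B'.reverse = _
    rw [hLr, ← reverse_zipWith hzlen]
  have hheadB : B'.headD 1 = 2 := by rw [headD_eq_head?, H2]; rfl
  refine ⟨⟨⟨?_, ?_, ?_, ?_, ?_⟩, ?_, ?_⟩, ?_, ?_, ?_, ?_, ?_⟩
  · simpa [hfst] using hBne
  · intro x hx
    rw [hfst, mem_reverse] at hx
    exact lt_of_lt_of_le (by norm_num) (H6 x hx)
  · rw [hfst]
    exact chain'_reverse.mpr (H3.imp (fun a b h => h))
  · rw [hfst, getLastD_rev, hheadB]
    exact ⟨1, rfl⟩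
  · rw [hfst]
    exact chain'_reverse.mpr (H5.imp (fun a b h => by intro ⟨h1, h2⟩; exact h ⟨h2, h1⟩))
  · rw [hfst, getLastD_rev, hheadB]
  · rw [hfst]
    exact chain'_reverse.mpr (H4.imp (fun a b h => h))
  · rw [hfst, length_reverse, hlenB]
  · rw [hsnd, length_reverse, length_zipWith, hzlen, min_self, hlenB]
  · rw [hsnd]
    exact chain'_reverse.mpr (H8.imp (fun a b h => h))
  · intro m hm
    rw [hsnd, mem_reverse] at hm
    exact (forall₂_zip_add H7).2 m hm
  · rw [hfst, hsnd, ← reverse_zipWith, (forall₂_zip_add H7).1, ← hLr]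
    rw [length_zipWith, hzlen, min_self]

lemma fmap_spec {p : List ℕ × List ℕ} (h1 : IrrEBP p.1) (hlen : p.1.length = p.2.length)
    (hc : p.2.Chain' (· ≥ ·)) (hev : ∀ m ∈ p.2, Even m) :
    EBP (zipWith (· + ·) p.1 p.2) ∧ (zipWith (· + ·) p.1 p.2).length = p.1.length ∧
    ginv (zipWith (· + ·) p.1 p.2) = p := by
  obtain ⟨⟨hne, hpos, hgt, _, hnto⟩, hlast, hdiff⟩ := h1
  have hev' : ∀ m ∈ p.2, m % 2 = 0 := fun m hm => Nat.even_iff.1 (hev m hm)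
  have hzl : (zipWith (· + ·) p.1 p.2).length = p.1.length := by
    simp [length_zipWith, hlen]
  obtain ⟨y, z, hy, hz, hyz⟩ := getLast?_zipWith_add p.1 p.2 hlen hne
  have hy2 : y = 2 := by
    rw [getLast?_of_ne_nil hne, hlast] at hy
    exact (Option.some_inj.1 hy).symm
  have hzmem : z ∈ p.2 := mem_of_getLast?' hz

  have hEBP : EBP (zipWith (· + ·) p.1 p.2) := by
    refine ⟨?_, ?_, ?_, ?_, ?_⟩
    · intro h
      apply hne
      rw [← length_eq_zero_iff, ← hzl, h]
      rfl
    · intro x hx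
      obtain ⟨u, hu, v, _, rfl⟩ := mem_zipWith_add _ _ x hx
      have := hpos u hu
      omega
    · exact chain'_zipWith_of (fun a b x y h1 h2 => by omega) _ _ hgt hc
    · rw [getLastD_eq_getLast?, hyz, hy2]
      obtain ⟨k, hk⟩ := hev z hzmem
      exact ⟨k + 1, by simp; omega⟩
    · exact chain'_NTO_zipWith _ _ hnto hev'
  refine ⟨hEBP, hzl, ?_⟩
  have hb1 : build ((zipWith (· + ·) p.1 p.2).reverse) = p.1.reverse := by
    rw [reverse_zipWith hlen]
    refine build_add (by simpa using hlen) (chain'_reverse.mpr hgt) ?_ ?_ ?_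
    · exact chain'_reverse.mpr (hdiff.imp (fun a b h => h))
    · rw [head?_reverse, getLast?_of_ne_nil hne, hlast]
    · intro x hx
      exact hev' x (by rwa [mem_reverse] at hx)
  show (_, _) = p
  rw [hb1, reverse_reverse]
  rw [zipWith_sub_add _ _ hlen]


lemma finite_bdd : ∀ (d n : ℕ), {l : List ℕ | l.length = d ∧ ∀ x ∈ l, x ≤ n}.Finite := by
  intro d n
  induction d with
  | zero =>
    apply Set.Finite.subset (Set.finite_singleton ([] : List ℕ))
    rintro l ⟨h, -⟩
    simp [length_eq_zero_iff.1 h]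
  | succ d ih =>
    apply Set.Finite.subset (Set.Finite.image2 (· :: ·) (Set.finite_Iic n) ih)
    rintro l ⟨hl, hb⟩
    cases l with
    | nil => simp at hl
    | cons a t =>
      exact Set.mem_image2_of_mem (by simp [hb a (by simp)])
        ⟨by simpa using hl, fun x hx => hb x (by simp [hx])⟩

lemma finite_subset_sum {d n : ℕ} {S : Set (List ℕ)}
    (h : ∀ l ∈ S, l.length = d ∧ l.sum = n) : S.Finite := by
  apply (finite_bdd d n).subset
  intro l hl
  obtain ⟨h1, h2⟩ := h l hl
  exact ⟨h1, fun x hx => h2 ▸ single_le_sum (fun _ _ => Nat.zero_le _) x hx⟩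

lemma le_headD_of_chain_gt {L : List ℕ} (h : Chain' (· > ·) L) : ∀ x ∈ L, x ≤ L.headD 0 := by
  cases L with
  | nil => simp
  | cons a t =>
    intro x hx
    have hp : List.Pairwise (· > ·) (a :: t) := chain'_iff_pairwise.1 h
    rcases mem_cons.1 hx with rfl | hx
    · simp
    · exact le_of_lt ((pairwise_cons.1 hp).1 x hx)

lemma getLastD_le_of_chain_ge {l : List ℕ} (h : Chain' (· ≥ ·) l) : ∀ x ∈ l, l.getLastD 0 ≤ x := by
  intro x hx
  have h' : Chain' (· ≤ ·) l.reverse := chain'_reverse.mpr (h.imp (fun a b hh => hh))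
  have hp : List.Pairwise (· ≤ ·) l.reverse := chain'_iff_pairwise.1 h'
  rw [← headD_rev]
  cases hrev : l.reverse with
  | nil => simp [reverse_eq_nil_iff.1 hrev] at hx
  | cons a t =>
    rw [hrev] at hp
    have hx' : x ∈ a :: t := by rw [← hrev, mem_reverse]; exact hx
    rcases mem_cons.1 hx' with rfl | hx'
    · simp
    · exact (pairwise_cons.1 hp).1 x hx'

lemma getLastD_mem {l : List ℕ} (h : l ≠ []) (d : ℕ) : l.getLastD d ∈ l := by
  rw [getLastD_eq_getLast?, getLast?_eq_getLast h]
  exact getLast_mem _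

lemma mul_length_le_sum : ∀ (l : List ℕ) (c : ℕ), (∀ x ∈ l, c ≤ x) → c * l.length ≤ l.sum := by
  intro l
  induction l with
  | nil => simp
  | cons a t ih =>
    intro c h
    have h1 := h a (by simp)
    have h2 := ih c (fun x hx => h x (by simp [hx]))
    simp only [length_cons, sum_cons]
    have h3 : c * (t.length + 1) = c * t.length + c := by ring
    omega

def VSet (d n : ℕ) : Set (List ℕ) :=
  {l | l.length = d ∧ l.Chain' (· ≥ ·) ∧ (∀ m ∈ l, Even m) ∧ l.sum = n}

lemma VSet_finite (d n : ℕ) : (VSet d n).Finite :=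
  finite_subset_sum (fun l hl => ⟨hl.1, hl.2.2.2⟩)

lemma VSet_zero (n : ℕ) : (VSet 0 n).ncard = if n = 0 then 1 else 0 := by
  split_ifs with h
  · subst h
    have : VSet 0 0 = {([] : List ℕ)} := by
      ext l
      simp only [VSet, Set.mem_setOf_eq, length_eq_zero_iff, Set.mem_singleton_iff]
      constructor
      · rintro ⟨rfl, -⟩; rfl
      · rintro rfl; exact ⟨rfl, by simp, by simp, rfl⟩
    rw [this, Set.ncard_singleton]
  · have : VSet 0 n = ∅ := by
      ext l
      simp only [VSet, Set.mem_setOf_eq, length_eq_zero_iff, Set.mem_empty_iff_false, iff_false]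
      rintro ⟨rfl, -, -, hs⟩
      simp at hs
      exact h hs.symm
    rw [this, Set.ncard_empty]

lemma sum_map_sub_two : ∀ {l : List ℕ}, (∀ x ∈ l, 2 ≤ x) → (l.map (· - 2)).sum + 2 * l.length = l.sum := by
  intro l
  induction l with
  | nil => simp
  | cons a t ih =>
    intro h
    have h1 := h a (by simp)
    have h2 := ih (fun x hx => h x (by simp [hx]))
    simp only [map_cons, sum_cons, length_cons]
    omega

lemma sum_map_add_two : ∀ (l : List ℕ), (l.map (· + 2)).sum = l.sum + 2 * l.length := by
  intro l
  induction l with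
  | nil => simp
  | cons a t ih =>
    simp only [map_cons, sum_cons, length_cons, ih]
    ring

lemma VSet_succ (d n : ℕ) :
    (VSet (d+1) n).ncard = (VSet d n).ncard +
      (if 2*(d+1) ≤ n then (VSet (d+1) (n - 2*(d+1))).ncard else 0) := by
  classical
  set A : Set (List ℕ) := {l ∈ VSet (d+1) n | l.getLastD 0 = 0} with hA
  set B : Set (List ℕ) := {l ∈ VSet (d+1) n | l.getLastD 0 ≠ 0} with hB
  have hU : VSet (d+1) n = A ∪ B := by
    ext l
    constructor
    · intro h
      by_cases hg : l.getLastD 0 = 0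
      · exact Or.inl ⟨h, hg⟩
      · exact Or.inr ⟨h, hg⟩
    · rintro (⟨h, -⟩ | ⟨h, -⟩) <;> exact h
  have hdisj : Disjoint A B := by
    rw [Set.disjoint_left]
    rintro l ⟨-, h1⟩ ⟨-, h2⟩
    exact h2 h1
  have hAfin : A.Finite := (VSet_finite (d+1) n).subset (fun l hl => hl.1)
  have hBfin : B.Finite := (VSet_finite (d+1) n).subset (fun l hl => hl.1)
  have hBelts : ∀ l ∈ B, ∀ x ∈ l, 2 ≤ x := by
    rintro l ⟨⟨hlen, hch, hev, hsum⟩, hlast⟩ x hx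
    have hne : l ≠ [] := by
      intro h; rw [h] at hlen; simp at hlen
    have hmem : l.getLastD 0 ∈ l := getLastD_mem hne 0
    have h2 : 2 ≤ l.getLastD 0 := by
      obtain ⟨k, hk⟩ := hev _ hmem
      omega
    exact le_trans h2 (getLastD_le_of_chain_ge hch x hx)
  have hAcard : A.ncard = (VSet d n).ncard := by
    have himg : A = (fun l => l ++ [0]) '' VSet d n := by
      ext l
      constructor
      · rintro ⟨⟨hlen, hch, hev, hsum⟩, hlast⟩
        have hne : l ≠ [] := by
          intro h; rw [h] at hlen; simp at hlen
        have hd : l.dropLast ++ [l.getLast hne] = l := dropLast_append_getLast hne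
        have hgl : l.getLast hne = 0 := by
          rw [getLastD_eq_getLast?, getLast?_eq_getLast hne] at hlast
          exact hlast
        refine ⟨l.dropLast, ⟨?_, ?_, ?_, ?_⟩, ?_⟩
        rotate_left 4
        · show l.dropLast ++ [0] = l
          rw [← hgl]
          exact hd
        · rw [length_dropLast, hlen]
          omega
        · exact hch.prefix (dropLast_prefix l)
        · exact fun m hm => hev m (mem_of_mem_dropLast hm)
        · have := congrArg List.sum hd
          rw [sum_append, hgl] at this
          simpa using this.trans hsum
      · rintro ⟨t, ⟨hlen, hch, hev, hsum⟩, rfl⟩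
        refine ⟨⟨?_, ?_, ?_, ?_⟩, ?_⟩
        · simp [hlen]
        · rw [chain'_append]
          exact ⟨hch, by simp, fun x hx y hy => by simp at hy; omega⟩
        · intro m hm
          rcases mem_append.1 hm with hm | hm
          · exact hev m hm
          · simp at hm; simp [hm]
        · simp [hsum]
        · rw [getLastD_eq_getLast?, getLast?_concat]
          rfl
    rw [himg, Set.ncard_image_of_injective _ (append_left_injective [0])]
  rw [hU, Set.ncard_union_eq hdisj hAfin hBfin, hAcard]
  congr 1
  by_cases hn : 2*(d+1) ≤ n
  · rw [if_pos hn]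
    have himg : B = (List.map (· + 2)) '' VSet (d+1) (n - 2*(d+1)) := by
      ext l
      constructor
      · rintro hlB
        obtain ⟨⟨hlen, hch, hev, hsum⟩, hlast⟩ := hlB
        have h2 : ∀ x ∈ l, 2 ≤ x := hBelts l ⟨⟨hlen, hch, hev, hsum⟩, hlast⟩
        refine ⟨l.map (· - 2), ⟨?_, ?_, ?_, ?_⟩, ?_⟩
        · simp [hlen]
        · rw [chain'_map]
          exact hch.imp (fun a b hab => Nat.sub_le_sub_right hab 2)
        · intro m hm
          obtain ⟨y, hy, rfl⟩ := mem_map.1 hm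
          rw [Nat.even_sub (h2 y hy)]
          simpa using hev y hy
        · have := sum_map_sub_two h2
          rw [hlen, hsum] at this
          omega
        · rw [map_map]
          have : l.map ((· + 2) ∘ (· - 2)) = l.map id :=
            map_congr_left (fun a ha => by have := h2 a ha; simp; omega)
          rw [this, map_id]
      · rintro ⟨t, ⟨hlen, hch, hev, hsum⟩, rfl⟩
        have hne : t ≠ [] := by
          intro h; rw [h] at hlen; simp at hlen
        refine ⟨⟨?_, ?_, ?_, ?_⟩, ?_⟩
        · simp [hlen]
        · rw [chain'_map]
          exact hch.imp (fun a b hab => by omega)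
        · intro m hm
          obtain ⟨y, hy, rfl⟩ := mem_map.1 hm
          obtain ⟨k, hk⟩ := hev y hy
          exact ⟨k + 1, by omega⟩
        · rw [sum_map_add_two, hsum, hlen]
          omega
        · have hmem : (t.map (· + 2)).getLastD 0 ∈ t.map (· + 2) :=
            getLastD_mem (by simpa [map_eq_nil_iff] using hne) 0
          obtain ⟨y, hy, hy2⟩ := mem_map.1 hmem
          omega
    rw [himg, Set.ncard_image_of_injective _ (map_injective_iff.2 (add_left_injective 2))]
  · rw [if_neg hn]
    have : B = ∅ := by
      ext l
      simp only [Set.mem_empty_iff_false, iff_false]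
      intro hlB
      have h2 : ∀ x ∈ l, 2 ≤ x := hBelts l hlB
      obtain ⟨⟨hlen, hch, hev, hsum⟩, hlast⟩ := hlB
      have := mul_length_le_sum l 2 h2
      rw [hlen, hsum] at this
      omega
    rw [this, Set.ncard_empty]

noncomputable def Vps (d : ℕ) : PowerSeries ℤ := PowerSeries.mk fun n => ((VSet d n).ncard : ℤ)

lemma poch_mul_Vps (d : ℕ) : poch d * Vps d = 1 := by
  induction d with
  | zero =>
    have h1 : poch 0 = 1 := by simp [poch]
    have h2 : Vps 0 = 1 := by
      ext n
      rw [Vps, PowerSeries.coeff_mk, PowerSeries.coeff_one, VSet_zero]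
      split_ifs <;> simp
    rw [h1, h2, one_mul]
  | succ d ih =>
    have key : Vps (d+1) * (1 - PowerSeries.X ^ (2*(d+1))) = Vps d := by
      ext n
      rw [mul_sub, mul_one, map_sub, PowerSeries.coeff_mul_X_pow']
      simp only [Vps, PowerSeries.coeff_mk]
      rw [VSet_succ d n]
      split_ifs with h <;> push_cast <;> ring
    have hp : poch (d+1) = poch d * (1 - PowerSeries.X ^ (2*(d+1))) := by
      rw [poch, poch, Finset.prod_range_succ]
    rw [hp, mul_assoc, mul_comm (1 - PowerSeries.X ^ (2*(d+1))) (Vps (d+1)), key, ih]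

lemma inv_poch (d : ℕ) : PowerSeries.invOfUnit (poch d) 1 = Vps d := by
  have hc : PowerSeries.constantCoeff (poch d) = 1 := by
    rw [poch, map_prod]
    apply Finset.prod_eq_one
    intro j hj
    rw [map_sub, map_one, map_pow, PowerSeries.constantCoeff_X]
    rw [zero_pow (by omega)]
    ring
  have h2 : poch d * PowerSeries.invOfUnit (poch d) 1 = 1 :=
    PowerSeries.mul_invOfUnit _ 1 (by rw [hc]; rfl)
  calc PowerSeries.invOfUnit (poch d) 1
      = (poch d * Vps d) * PowerSeries.invOfUnit (poch d) 1 := by rw [poch_mul_Vps, one_mul]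
    _ = Vps d * (poch d * PowerSeries.invOfUnit (poch d) 1) := by ring
    _ = Vps d := by rw [h2, mul_one]

def ISetN (d N n : ℕ) : Set (List ℕ) :=
  {L | IrrEBP L ∧ L.length = d ∧ L.headD 0 = N ∧ L.sum = n}

lemma ISet_finite (d N : ℕ) : {L : List ℕ | IrrEBP L ∧ L.length = d ∧ L.headD 0 = N}.Finite := by
  apply (finite_bdd d N).subset
  rintro L ⟨h1, h2, h3⟩
  exact ⟨h2, fun x hx => h3 ▸ le_headD_of_chain_gt h1.1.2.2.1 x hx⟩

lemma ISetN_finite (d N n : ℕ) : (ISetN d N n).Finite :=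
  (ISet_finite d N).subset (fun L hL => ⟨hL.1, hL.2.1, hL.2.2.1⟩)

lemma coeff_sPSd (d N n : ℕ) :
    PowerSeries.coeff n (sPSd d N) = ((ISetN d N n).ncard : ℤ) := by
  classical
  have hfin := ISet_finite d N
  rw [sPSd, ← hfin.coe_toFinset, finsum_mem_coe_finset, map_sum]
  simp only [PowerSeries.coeff_monomial]
  have : ∀ L ∈ hfin.toFinset, (if n = L.sum then (1:ℤ) else 0) = (if L.sum = n then (1:ℤ) else 0) := by
    intro L _
    by_cases h : n = L.sum
    · rw [if_pos h, if_pos h.symm]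
    · rw [if_neg h, if_neg (fun hh => h hh.symm)]
  rw [Finset.sum_congr rfl this, Finset.sum_boole]
  congr 1
  rw [← Set.ncard_coe_finset]
  congr 1
  ext L
  simp only [Finset.coe_filter, Set.mem_setOf_eq, Set.Finite.mem_toFinset, ISetN]
  tauto

lemma ISetN_empty {d N n i : ℕ} (hN : n < N) (hi : i ≤ n) : ISetN d N i = ∅ := by
  ext L
  simp only [Set.mem_empty_iff_false, iff_false, ISetN, Set.mem_setOf_eq]
  rintro ⟨h1, -, h3, h4⟩
  have hne : L ≠ [] := h1.1.1
  obtain ⟨a, t, rfl⟩ := List.exists_cons_of_ne_nil hne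
  simp only [headD_cons] at h3
  subst h3
  rw [sum_cons] at h4
  omega

/-- For each `d ≥ 1`: componentwise addition is a sum-preserving bijection
from pairs (irreducible Euclidean billiard partition with `d` parts, weakly
decreasing list of `d` even natural numbers) onto Euclidean billiard
partitions with `d` parts; consequently the generating function of Euclidean
billiard partitions with `d` parts equals `(Σ_N s(d,N))/(q²;q²)_d`,
stated coefficientwise in `q`. -/
theorem gf_fixed_d (d : ℕ) (hd : 1 ≤ d) :
    Set.BijOn (fun p : List ℕ × List ℕ => List.zipWith (· + ·) p.1 p.2)
      {p : List ℕ × List ℕ | IrrEBP p.1 ∧ p.1.length = d ∧ p.2.length = d ∧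
        p.2.Chain' (· ≥ ·) ∧ ∀ m ∈ p.2, Even m}
      {L : List ℕ | EBP L ∧ L.length = d} ∧
    (∀ p : List ℕ × List ℕ,
      (IrrEBP p.1 ∧ p.1.length = d ∧ p.2.length = d ∧
        p.2.Chain' (· ≥ ·) ∧ ∀ m ∈ p.2, Even m) →
      (List.zipWith (· + ·) p.1 p.2).sum = p.1.sum + p.2.sum) ∧
    (∀ n : ℕ,
      ({L : List ℕ | EBP L ∧ L.length = d ∧ L.sum = n}.ncard : ℤ) =
        ∑ᶠ N : ℕ, PowerSeries.coeff n
          (sPSd d N * PowerSeries.invOfUnit (poch d) 1)) := by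
  classical
  have hsum : ∀ p : List ℕ × List ℕ,
      (IrrEBP p.1 ∧ p.1.length = d ∧ p.2.length = d ∧
        p.2.Chain' (· ≥ ·) ∧ ∀ m ∈ p.2, Even m) →
      (List.zipWith (· + ·) p.1 p.2).sum = p.1.sum + p.2.sum := by
    rintro p ⟨-, h2, h3, -, -⟩
    exact sum_zipWith_add _ _ (h2.trans h3.symm)
  have hbij : Set.BijOn (fun p : List ℕ × List ℕ => List.zipWith (· + ·) p.1 p.2)
      {p : List ℕ × List ℕ | IrrEBP p.1 ∧ p.1.length = d ∧ p.2.length = d ∧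
        p.2.Chain' (· ≥ ·) ∧ ∀ m ∈ p.2, Even m}
      {L : List ℕ | EBP L ∧ L.length = d} := by
    apply Set.InvOn.bijOn (f' := ginv)
    · constructor
      · rintro p ⟨h1, h2, h3, h4, h5⟩
        exact (fmap_spec h1 (h2.trans h3.symm) h4 h5).2.2
      · rintro L ⟨hL, -⟩
        exact (ginv_spec hL).2.2.2.2.2
    · rintro p ⟨h1, h2, h3, h4, h5⟩
      obtain ⟨hE, hlen, -⟩ := fmap_spec h1 (h2.trans h3.symm) h4 h5
      exact ⟨hE, hlen.trans h2⟩
    · rintro L ⟨hL, hlen⟩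
      obtain ⟨g1, g2, g3, g4, g5, -⟩ := ginv_spec hL
      exact ⟨g1, g2.trans hlen, g3.trans hlen, g4, g5⟩
  refine ⟨hbij, hsum, ?_⟩
  intro n
  have hRHS : ∀ N : ℕ, PowerSeries.coeff n (sPSd d N * PowerSeries.invOfUnit (poch d) 1)
      = ∑ ij ∈ Finset.HasAntidiagonal.antidiagonal n,
          ((ISetN d N ij.1).ncard : ℤ) * ((VSet d ij.2).ncard : ℤ) := by
    intro N
    rw [inv_poch, PowerSeries.coeff_mul]
    apply Finset.sum_congr rfl
    intro ij _
    rw [coeff_sPSd]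
    simp only [Vps, PowerSeries.coeff_mk]
  have hsupp : (Function.support fun N => PowerSeries.coeff n
      (sPSd d N * PowerSeries.invOfUnit (poch d) 1)) ⊆ ↑(Finset.range (n+1)) := by
    intro N hN
    simp only [Function.mem_support] at hN
    by_contra h
    apply hN
    have hn : n < N := by
      simp only [Finset.coe_range, Set.mem_Iio] at h
      omega
    rw [hRHS]
    apply Finset.sum_eq_zero
    intro ij hij
    rw [ISetN_empty hn (Finset.HasAntidiagonal.antidiagonal.fst_le hij)]
    simp
  rw [finsum_eq_finset_sum_of_support_subset _ hsupp]
  rw [show (∑ N ∈ Finset.range (n+1), PowerSeries.coeff n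
        (sPSd d N * PowerSeries.invOfUnit (poch d) 1))
      = ∑ N ∈ Finset.range (n+1), ∑ ij ∈ Finset.HasAntidiagonal.antidiagonal n,
          ((ISetN d N ij.1).ncard : ℤ) * ((VSet d ij.2).ncard : ℤ) from
    Finset.sum_congr rfl (fun N _ => hRHS N)]
  -- now the combinatorial count
  have hbij2 : Set.BijOn (fun p : List ℕ × List ℕ => List.zipWith (· + ·) p.1 p.2)
      {p : List ℕ × List ℕ | (IrrEBP p.1 ∧ p.1.length = d ∧ p.2.length = d ∧
        p.2.Chain' (· ≥ ·) ∧ ∀ m ∈ p.2, Even m) ∧ p.1.sum + p.2.sum = n}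
      {L : List ℕ | EBP L ∧ L.length = d ∧ L.sum = n} := by
    refine ⟨?_, hbij.injOn.mono (fun p hp => hp.1), ?_⟩
    · rintro p ⟨hp1, hps⟩
      have := hbij.mapsTo hp1
      exact ⟨this.1, this.2, by rw [hsum p hp1, hps]⟩
    · rintro L ⟨hL, hlen, hLsum⟩
      obtain ⟨g1, g2, g3, g4, g5, g6⟩ := ginv_spec hL
      have hpsrc : IrrEBP (ginv L).1 ∧ (ginv L).1.length = d ∧ (ginv L).2.length = d ∧
          (ginv L).2.Chain' (· ≥ ·) ∧ ∀ m ∈ (ginv L).2, Even m :=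
        ⟨g1, g2.trans hlen, g3.trans hlen, g4, g5⟩
      refine ⟨ginv L, ⟨hpsrc, ?_⟩, g6⟩
      rw [← hsum _ hpsrc, g6, hLsum]
  have hfin_srcn : ({p : List ℕ × List ℕ | (IrrEBP p.1 ∧ p.1.length = d ∧ p.2.length = d ∧
      p.2.Chain' (· ≥ ·) ∧ ∀ m ∈ p.2, Even m) ∧ p.1.sum + p.2.sum = n}).Finite := by
    apply Set.Finite.subset ((finite_bdd d n).prod (finite_bdd d n))
    rintro p ⟨⟨h1, h2, h3, -, -⟩, hs⟩
    constructor
    · exact ⟨h2, fun x hx =>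
        le_trans (single_le_sum (fun _ _ => Nat.zero_le _) x hx) (by omega)⟩
    · exact ⟨h3, fun x hx =>
        le_trans (single_le_sum (fun _ _ => Nat.zero_le _) x hx) (by omega)⟩
  have hLHS1 : ({L : List ℕ | EBP L ∧ L.length = d ∧ L.sum = n}).ncard =
      ({p : List ℕ × List ℕ | (IrrEBP p.1 ∧ p.1.length = d ∧ p.2.length = d ∧
        p.2.Chain' (· ≥ ·) ∧ ∀ m ∈ p.2, Even m) ∧ p.1.sum + p.2.sum = n}).ncard := by
    rw [← hbij2.image_eq, Set.ncard_image_of_injOn hbij2.injOn]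
  have hkey : hfin_srcn.toFinset = (Finset.range (n+1)).biUnion (fun N =>
      (Finset.HasAntidiagonal.antidiagonal n).biUnion (fun ij =>
        ((ISetN_finite d N ij.1).toFinset ×ˢ (VSet_finite d ij.2).toFinset))) := by
    ext p
    simp only [Set.Finite.mem_toFinset, Finset.mem_biUnion, Finset.mem_range,
      Finset.HasAntidiagonal.mem_antidiagonal, Finset.mem_product, Set.mem_setOf_eq]
    constructor
    · rintro ⟨⟨h1, h2, h3, h4, h5⟩, hs⟩
      refine ⟨p.1.headD 0, ?_, (p.1.sum, p.2.sum), hs, ?_, ?_⟩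
      · obtain ⟨a, t, hpe⟩ := List.exists_cons_of_ne_nil h1.1.1
        rw [hpe, headD_cons]
        have : p.1.sum = a + t.sum := by rw [hpe, sum_cons]
        omega
      · exact ⟨h1, h2, rfl, rfl⟩
      · exact ⟨h3, h4, h5, rfl⟩
    · rintro ⟨N, hN, ⟨i, j⟩, hij, ⟨I1, I2, I3, I4⟩, V1, V2, V3, V4⟩
      exact ⟨⟨I1, I2, V1, V2, V3⟩, by rw [I4, V4]; exact hij⟩
  have houter : ∀ x ∈ Finset.range (n+1), ∀ y ∈ Finset.range (n+1), x ≠ y →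
      Disjoint ((Finset.HasAntidiagonal.antidiagonal n).biUnion (fun ij =>
        ((ISetN_finite d x ij.1).toFinset ×ˢ (VSet_finite d ij.2).toFinset)))
      ((Finset.HasAntidiagonal.antidiagonal n).biUnion (fun ij =>
        ((ISetN_finite d y ij.1).toFinset ×ˢ (VSet_finite d ij.2).toFinset))) := by
    intro x _ y _ hxy
    rw [Finset.disjoint_left]
    intro p hpx hpy
    obtain ⟨ij, -, hp⟩ := Finset.mem_biUnion.1 hpx
    obtain ⟨kl, -, hq⟩ := Finset.mem_biUnion.1 hpy
    rw [Finset.mem_product] at hp hq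
    have h1 := (Set.Finite.mem_toFinset _).1 hp.1
    have h2 := (Set.Finite.mem_toFinset _).1 hq.1
    exact hxy (h1.2.2.1.symm.trans h2.2.2.1)
  have hinner : ∀ N : ℕ, ∀ ij ∈ Finset.HasAntidiagonal.antidiagonal n, ∀ kl ∈ Finset.HasAntidiagonal.antidiagonal n, ij ≠ kl →
      Disjoint ((ISetN_finite d N ij.1).toFinset ×ˢ (VSet_finite d ij.2).toFinset)
        ((ISetN_finite d N kl.1).toFinset ×ˢ (VSet_finite d kl.2).toFinset) := by
    intro N ij _ kl _ hne
    rw [Finset.disjoint_left]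
    intro p hp hq
    rw [Finset.mem_product] at hp hq
    have h1 := (Set.Finite.mem_toFinset _).1 hp.1
    have h2 := (Set.Finite.mem_toFinset _).1 hq.1
    have h3 := (Set.Finite.mem_toFinset _).1 hp.2
    have h4 := (Set.Finite.mem_toFinset _).1 hq.2
    apply hne
    have e1 : ij.1 = kl.1 := h1.2.2.2.symm.trans h2.2.2.2
    have e2 : ij.2 = kl.2 := h3.2.2.2.symm.trans h4.2.2.2
    exact Prod.ext e1 e2
  have hcard : ({p : List ℕ × List ℕ | (IrrEBP p.1 ∧ p.1.length = d ∧ p.2.length = d ∧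
      p.2.Chain' (· ≥ ·) ∧ ∀ m ∈ p.2, Even m) ∧ p.1.sum + p.2.sum = n}).ncard =
      ∑ N ∈ Finset.range (n+1), ∑ ij ∈ Finset.HasAntidiagonal.antidiagonal n,
        (ISetN d N ij.1).ncard * (VSet d ij.2).ncard := by
    rw [Set.ncard_eq_toFinset_card _ hfin_srcn, hkey, Finset.card_biUnion houter]
    apply Finset.sum_congr rfl
    intro N _
    rw [Finset.card_biUnion (hinner N)]
    apply Finset.sum_congr rfl
    intro ij _
    rw [Finset.card_product, ← Set.ncard_eq_toFinset_card _ (ISetN_finite d N ij.1),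
      ← Set.ncard_eq_toFinset_card _ (VSet_finite d ij.2)]
  rw [hLHS1, hcard]
  push_cast
  rfl
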